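/- Let D > 0, κ > 0, T > 0, q = 2Dκ, and h(x) = (|x| − 1)². For every t ∈ [0,T) and x ∈ ℝ, the infimum over all continuously differentiable paths φ : [t,T] → ℝ with φ(t) = x of the quantity (1/(2q)) ∫_t^T (φ'(s) + κ φ(s))² ds + h(φ(T)) equals G(t,x) = (e^{κT} − |x| e^{κt})² / ((1 + 2D)e^{2κT} − 2De^{2κt}). -/

import Mathlib

open intervalIntegral

set_option maxHeartbeats 1000000

private lemma hasDerivAt_exp_mul' (k s : ℝ) :
    HasDerivAt (fun u : ℝ => Real.exp (k * u)) (k * Real.exp (k * s)) s := by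
  simpa [mul_comm] using ((hasDerivAt_id s).const_mul k).exp

private lemma key_ineq (D kappa qv E z d p : ℝ) (hD : 0 < D) (hk : 0 < kappa) (hd : 0 < d)
    (hqv : qv = 2 * D * kappa) :
    0 ≤ 1 / (2 * qv) * p ^ 2 + (2 * z * (-(p * E)) * d - z ^ 2 * (-(4 * D * kappa * E ^ 2))) / d ^ 2 := by
  have key : 1 / (2 * qv) * p ^ 2 + (2 * z * (-(p * E)) * d - z ^ 2 * (-(4 * D * kappa * E ^ 2))) / d ^ 2
      = (d * p - 4 * D * kappa * E * z) ^ 2 / (4 * D * kappa * d ^ 2) := by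
    rw [hqv]; field_simp; ring
  rw [key]; positivity

/-- The value of the calculus of variations problem
`inf_{φ(t)=x} [(1/(2q))∫_t^T (φ' + κφ)² ds + h(φ(T))]` with `q = 2Dκ` and
`h(x) = (|x|−1)²` equals
`G(t,x) = (e^{κT} − |x|e^{κt})²/((1+2D)e^{2κT} − 2De^{2κt})`. -/
theorem explicit_variational_value (D kappa T : ℝ) (hD : 0 < D) (hk : 0 < kappa)
    (hT : 0 < T) (q : ℝ) (hq : q = 2 * D * kappa)
    (h : ℝ → ℝ) (hh : ∀ x, h x = (|x| - 1) ^ 2)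
    (t x : ℝ) (ht : 0 ≤ t) (htT : t < T) :
    IsGLB {v : ℝ | ∃ φ φ' : ℝ → ℝ,
        (∀ s ∈ Set.Icc t T, HasDerivAt φ (φ' s) s) ∧
        ContinuousOn φ' (Set.Icc t T) ∧ φ t = x ∧
        v = (1 / (2 * q)) * (∫ s in t..T, (φ' s + kappa * φ s) ^ 2) + h (φ T)}
      ((Real.exp (kappa * T) - |x| * Real.exp (kappa * t)) ^ 2 /
        ((1 + 2 * D) * Real.exp (2 * kappa * T) - 2 * D * Real.exp (2 * kappa * t))) := by
  have h2T : Real.exp (2 * kappa * T) = Real.exp (kappa * T) ^ 2 := by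
    rw [sq, ← Real.exp_add]; ring_nf
  have h2t : Real.exp (2 * kappa * t) = Real.exp (kappa * t) ^ 2 := by
    rw [sq, ← Real.exp_add]; ring_nf
  rw [h2T, h2t]
  obtain ⟨Et, hEt_def⟩ : ∃ y, Real.exp (kappa * t) = y := ⟨_, rfl⟩
  obtain ⟨ET, hET_def⟩ : ∃ y, Real.exp (kappa * T) = y := ⟨_, rfl⟩
  rw [hEt_def, hET_def]
  have hEt : 0 < Et := hEt_def ▸ Real.exp_pos _
  have hET : 0 < ET := hET_def ▸ Real.exp_pos _
  have hlt : Et < ET := by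
    rw [← hEt_def, ← hET_def]; exact Real.exp_lt_exp.mpr (by nlinarith)
  have hsq : Et ^ 2 < ET ^ 2 := by nlinarith
  have hne2 : ET ^ 2 - Et ^ 2 ≠ 0 := by nlinarith
  have hden : 0 < (1 + 2 * D) * ET ^ 2 - 2 * D * Et ^ 2 := by nlinarith
  apply IsLeast.isGLB
  constructor
  · -- membership: the infimum is attained
    obtain ⟨sgn, hsgn1, hsgn2⟩ : ∃ s : ℝ, s * |x| = x ∧ s ^ 2 = 1 := by
      rcases le_or_gt 0 x with hx | hx
      · exact ⟨1, by rw [abs_of_nonneg hx, one_mul], by norm_num⟩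
      · exact ⟨-1, by rw [abs_of_neg hx]; ring, by norm_num⟩
    obtain ⟨a, ha⟩ : ∃ y : ℝ, y = |x| * Et := ⟨_, rfl⟩
    obtain ⟨M, hM⟩ : ∃ y : ℝ, y = 2 * D * (ET ^ 2 - Et ^ 2) := ⟨_, rfl⟩
    have hMpos : 0 < M := by rw [hM]; nlinarith
    have hEM : 0 < ET ^ 2 + M := by positivity
    have ha0 : 0 ≤ a := ha ▸ mul_nonneg (abs_nonneg x) hEt.le
    obtain ⟨b, hb⟩ : ∃ y : ℝ, y = (a * ET ^ 2 + M * ET) / (ET ^ 2 + M) := ⟨_, rfl⟩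
    have hbpos : 0 < b := hb ▸ div_pos (by nlinarith) hEM
    obtain ⟨C, hC⟩ : ∃ y : ℝ, y = (b - a) / (ET ^ 2 - Et ^ 2) := ⟨_, rfl⟩
    obtain ⟨α, hα⟩ : ∃ y : ℝ, y = sgn * (a - C * Et ^ 2) := ⟨_, rfl⟩
    obtain ⟨β, hβ⟩ : ∃ y : ℝ, y = sgn * C := ⟨_, rfl⟩
    refine ⟨fun s => α * Real.exp (-kappa * s) + β * Real.exp (kappa * s),
      fun s => α * (-kappa * Real.exp (-kappa * s)) + β * (kappa * Real.exp (kappa * s)),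
      fun s _ => ((hasDerivAt_exp_mul' (-kappa) s).const_mul α).add
        ((hasDerivAt_exp_mul' kappa s).const_mul β), ?_, ?_, ?_⟩
    · fun_prop
    · -- initial condition
      show α * Real.exp (-kappa * t) + β * Real.exp (kappa * t) = x
      have hexp : Real.exp (-kappa * t) = Et⁻¹ := by
        rw [show -kappa * t = -(kappa * t) by ring, Real.exp_neg, hEt_def]
      have key : α + β * Et ^ 2 = x * Et := by
        rw [hα, hβ, ha]; linear_combination Et * hsgn1
      rw [hexp, hEt_def]
      field_simp
      linear_combination key
    · -- value equality
      have hF : ∀ s ∈ Set.uIcc t T,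
          HasDerivAt (fun u => 2 * kappa * β ^ 2 * Real.exp (kappa * u) ^ 2)
            ((α * (-kappa * Real.exp (-kappa * s)) + β * (kappa * Real.exp (kappa * s))
              + kappa * (α * Real.exp (-kappa * s) + β * Real.exp (kappa * s))) ^ 2) s := by
        intro s _
        have hd := ((hasDerivAt_exp_mul' kappa s).fun_pow 2).const_mul (2 * kappa * β ^ 2)
        refine hd.congr_deriv ?_
        push_cast; ring
      have hint : IntervalIntegrable (fun s =>
          (α * (-kappa * Real.exp (-kappa * s)) + β * (kappa * Real.exp (kappa * s))
            + kappa * (α * Real.exp (-kappa * s) + β * Real.exp (kappa * s))) ^ 2)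
          MeasureTheory.volume t T := (Continuous.intervalIntegrable (by fun_prop) t T)
      have hI : (∫ s in t..T,
          (α * (-kappa * Real.exp (-kappa * s)) + β * (kappa * Real.exp (kappa * s))
            + kappa * (α * Real.exp (-kappa * s) + β * Real.exp (kappa * s))) ^ 2)
          = 2 * kappa * β ^ 2 * ET ^ 2 - 2 * kappa * β ^ 2 * Et ^ 2 := by
        rw [integral_eq_sub_of_hasDerivAt hF hint, hET_def, hEt_def]
      have hCb : C * (ET ^ 2 - Et ^ 2) = b - a := by rw [hC]; exact div_mul_cancel₀ _ hne2
      have hexpT : Real.exp (-kappa * T) = ET⁻¹ := by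
        rw [show -kappa * T = -(kappa * T) by ring, Real.exp_neg, hET_def]
      have hφT : α * ET⁻¹ + β * ET = sgn * b / ET := by
        have key : α + β * ET ^ 2 = sgn * b := by
          rw [hα, hβ]; linear_combination sgn * hCb
        field_simp
        linear_combination key
      have habs : |sgn| = 1 := by
        rcases mul_eq_zero.mp (show (sgn - 1) * (sgn + 1) = 0 by nlinarith) with h' | h'
        · rw [show sgn = 1 by linarith]; norm_num
        · rw [show sgn = -1 by linarith]; norm_num
      have hβ2 : β ^ 2 = C ^ 2 := by rw [hβ, mul_pow, hsgn2, one_mul]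
      show _ = (1 / (2 * q)) * _ + h _
      beta_reduce
      rw [hI, hET_def, hexpT, hφT, hh, abs_div, abs_mul, habs, one_mul, abs_of_pos hbpos, abs_of_pos hET,
        hβ2, hq, hC, hb, hM, ha]
      have hd' : ((1:ℝ) + 2 * D) * ET ^ 2 - 2 * D * Et ^ 2 ≠ 0 := ne_of_gt hden
      have hEM' : ET ^ 2 + 2 * D * (ET ^ 2 - Et ^ 2) ≠ 0 := by nlinarith
      field_simp
      rw [div_eq_iff (ne_of_gt (by linarith))]
      ring
  · -- lower bound
    rintro v ⟨φ, φ', hdφ, hcφ', hφt, hveq⟩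
    obtain ⟨σ, hσ2, hσh⟩ : ∃ σ : ℝ, σ ^ 2 = 1 ∧ h (φ T) = (φ T - σ) ^ 2 := by
      rcases le_or_gt 0 (φ T) with hy | hy
      · exact ⟨1, by norm_num, by rw [hh, abs_of_nonneg hy]⟩
      · exact ⟨-1, by norm_num, by rw [hh, abs_of_neg hy]; ring⟩
    have hdpos : ∀ s ∈ Set.Icc t T, 0 < (1 + 2 * D) * ET ^ 2 - 2 * D * Real.exp (kappa * s) ^ 2 := by
      intro s hs
      have h1 : Real.exp (kappa * s) ≤ ET := by
        rw [← hET_def]; exact Real.exp_le_exp.mpr (mul_le_mul_of_nonneg_left hs.2 hk.le)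
      have h2 : 0 < Real.exp (kappa * s) := Real.exp_pos _
      have h3 : Real.exp (kappa * s) ^ 2 ≤ ET ^ 2 := by nlinarith
      nlinarith
    have hφc : ContinuousOn φ (Set.Icc t T) :=
      fun s hs => (hdφ s hs).continuousAt.continuousWithinAt
    set Z : ℝ → ℝ := fun s => σ * ET - φ s * Real.exp (kappa * s) with hZ
    set DF : ℝ → ℝ := fun s => (1 + 2 * D) * ET ^ 2 - 2 * D * Real.exp (kappa * s) ^ 2 with hDF
    set g : ℝ → ℝ := fun s => Z s ^ 2 / DF s with hgdef
    set g' : ℝ → ℝ := fun s =>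
      (2 * Z s * (-((φ' s + kappa * φ s) * Real.exp (kappa * s))) * DF s
        - Z s ^ 2 * (-(4 * D * kappa * Real.exp (kappa * s) ^ 2))) / DF s ^ 2 with hg'def
    have hg : ∀ s ∈ Set.Icc t T, HasDerivAt g (g' s) s := by
      intro s hs
      have he := hasDerivAt_exp_mul' kappa s
      have hz : HasDerivAt Z (-((φ' s + kappa * φ s) * Real.exp (kappa * s))) s := by
        rw [hZ]
        have hder := (hasDerivAt_const s (σ * ET)).sub ((hdφ s hs).fun_mul he)
        refine hder.congr_deriv ?_
        ring
      have hd : HasDerivAt DF (-(4 * D * kappa * Real.exp (kappa * s) ^ 2)) s := by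
        rw [hDF]
        have hder := (hasDerivAt_const s ((1 + 2 * D) * ET ^ 2)).sub ((he.fun_pow 2).const_mul (2 * D))
        refine hder.congr_deriv ?_
        push_cast; ring
      have hdne : DF s ≠ 0 := by
        simp only [hDF]; exact ne_of_gt (hdpos s hs)
      have hder := (hz.fun_pow 2).fun_div hd hdne
      rw [hgdef, hg'def]
      refine hder.congr_deriv ?_
      push_cast; ring
    have hg'c : ContinuousOn g' (Set.Icc t T) := by
      simp only [hg'def, hZ, hDF]
      apply ContinuousOn.div
      · fun_prop
      · fun_prop
      · intro s hs; exact pow_ne_zero 2 (ne_of_gt (hdpos s hs))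
    have hintg' : IntervalIntegrable g' MeasureTheory.volume t T := by
      apply ContinuousOn.intervalIntegrable; rwa [Set.uIcc_of_le htT.le]
    have hintL : IntervalIntegrable (fun s => (φ' s + kappa * φ s) ^ 2)
        MeasureTheory.volume t T := by
      apply ContinuousOn.intervalIntegrable
      rw [Set.uIcc_of_le htT.le]
      exact (hcφ'.add (continuousOn_const.mul hφc)).pow 2
    have hFTC : ∫ s in t..T, g' s = g T - g t :=
      integral_eq_sub_of_hasDerivAt (fun s hs => hg s (by rwa [Set.uIcc_of_le htT.le] at hs)) hintg'
    have hpt : ∀ s ∈ Set.Icc t T, 0 ≤ (1 / (2 * q)) * (φ' s + kappa * φ s) ^ 2 + g' s := by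
      intro s hs
      simp only [hg'def, hZ, hDF]
      exact key_ineq D kappa q (Real.exp (kappa * s)) (σ * ET - φ s * Real.exp (kappa * s))
        ((1 + 2 * D) * ET ^ 2 - 2 * D * Real.exp (kappa * s) ^ 2) (φ' s + kappa * φ s)
        hD hk (hdpos s hs) hq
    have hnn : 0 ≤ ∫ s in t..T, ((1 / (2 * q)) * (φ' s + kappa * φ s) ^ 2 + g' s) :=
      intervalIntegral.integral_nonneg htT.le hpt
    have hsplit : (∫ s in t..T, ((1 / (2 * q)) * (φ' s + kappa * φ s) ^ 2 + g' s))
        = (1 / (2 * q)) * (∫ s in t..T, (φ' s + kappa * φ s) ^ 2) + (g T - g t) := by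
      rw [integral_add (hintL.const_mul _) hintg', integral_const_mul, hFTC]
    have hgT : g T = (φ T - σ) ^ 2 := by
      simp only [hgdef, hZ, hDF]
      rw [hET_def]
      have hETne : ET ^ 2 ≠ 0 := by positivity
      rw [show (1 + 2 * D) * ET ^ 2 - 2 * D * ET ^ 2 = ET ^ 2 by ring]
      field_simp
      ring
    have hgt : (ET - |x| * Et) ^ 2 / ((1 + 2 * D) * ET ^ 2 - 2 * D * Et ^ 2) ≤ g t := by
      simp only [hgdef, hZ, hDF]
      rw [hEt_def, hφt]
      apply (div_le_div_iff_of_pos_right hden).mpr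
      have hσc : σ = 1 ∨ σ = -1 := by
        rcases mul_eq_zero.mp (show (σ - 1) * (σ + 1) = 0 by nlinarith) with h' | h'
        · left; linarith
        · right; linarith
      have hxEt := mul_pos hET hEt
      rcases hσc with h' | h' <;> rcases le_or_gt 0 x with hx | hx <;> subst h'
      · rw [abs_of_nonneg hx]; nlinarith []
      · rw [abs_of_neg hx]; nlinarith [mul_pos hxEt (neg_pos.mpr hx)]
      · rw [abs_of_nonneg hx]; nlinarith [mul_nonneg (mul_nonneg hET.le hEt.le) hx]
      · rw [abs_of_neg hx]; nlinarith []
    rw [hveq, hσh]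
    rw [hsplit] at hnn
    linarith
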